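/- arXiv:2012.13433 — 5 statements merged into one kernel-verified Lean document; each statement's English description precedes it below -/
import Mathlib

section
/- For a subset Γ of the dual group of a finite abelian group G and ε ∈ (0, 1), the Bohr set Bohr(Γ, ε) = {x ∈ G : |χ(x) − 1| ≤ ε for all χ ∈ Γ} has cardinality at least (ε/(2π))^{|Γ|} · |G|. -/
open Real Finset

/-- Chord length is at most arc length: `|e^{it} - 1| ≤ |t|`. -/
lemma chord_le_arc (t : ℝ) :
    ‖Complex.exp (t * Complex.I) - 1‖ ≤ |t| := by
  have h1 : (Complex.exp ((t : ℂ) * Complex.I) - 1).re = Real.cos t - 1 := by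
    simp [Complex.exp_ofReal_mul_I_re]
  have h2 : (Complex.exp ((t : ℂ) * Complex.I) - 1).im = Real.sin t := by
    simp [Complex.exp_ofReal_mul_I_im]
  rw [Complex.norm_def, Complex.normSq_apply, h1, h2]
  have hkey : (Real.cos t - 1) * (Real.cos t - 1) + Real.sin t * Real.sin t
      = 2 - 2 * Real.cos t := by
    nlinarith [Real.sin_sq_add_cos_sq t]
  rw [hkey]
  have hcos : 1 - t ^ 2 / 2 ≤ Real.cos t := Real.one_sub_sq_div_two_le_cos
  calc Real.sqrt (2 - 2 * Real.cos t) ≤ Real.sqrt (t ^ 2) := by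
        apply Real.sqrt_le_sqrt; nlinarith
    _ = |t| := Real.sqrt_sq_eq_abs t

set_option maxHeartbeats 1000000 in
theorem stmt4 {G : Type*} [AddCommGroup G] [Fintype G]
    (Γ : Finset (AddChar G ℂ)) (ε : ℝ) (hε : ε ∈ Set.Ioo (0 : ℝ) 1) :
    (ε / (2 * Real.pi)) ^ Γ.card * (Fintype.card G : ℝ) ≤
      Nat.card {x : G | ∀ χ ∈ Γ, ‖χ x - 1‖ ≤ ε} := by
  classical
  obtain ⟨hε0, hε1⟩ := hε
  have hπ : (0 : ℝ) < Real.pi := Real.pi_pos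
  set e : ℕ := Fintype.card G with hedef
  have he : 0 < e := Fintype.card_pos
  haveI : NeZero e := ⟨he.ne'⟩
  have hereal : (0 : ℝ) < e := by exact_mod_cast he
  have hnorm : ∀ (χ : AddChar G ℂ) (x : G), ‖χ x‖ = 1 := fun χ x =>
    χ.norm_apply x
  -- every character value is an e-th root of unity, with phase on the grid (1/e)ℤ
  have hphase : ∀ (χ : AddChar G ℂ) (x : G), ∃ a : ZMod e,
      χ x = Complex.exp (2 * Real.pi * (a.val : ℝ) / e * Complex.I) := by
    intro χ x
    have hroot : (χ x) ^ e = 1 := by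
      rw [← AddChar.map_nsmul_eq_pow, hedef, card_nsmul_eq_zero, AddChar.map_zero_eq_one]
    have hax : χ x = Complex.exp (((χ x).arg : ℂ) * Complex.I) := by
      have := Complex.norm_mul_exp_arg_mul_I (χ x)
      rw [hnorm χ x] at this; simpa using this.symm
    set θ := (χ x).arg with hθ
    have h1 : Complex.exp ((e : ℂ) * ((θ : ℂ) * Complex.I)) = 1 := by
      rw [Complex.exp_nat_mul, ← hax, hroot]
    rw [Complex.exp_eq_one_iff] at h1
    obtain ⟨m, hm⟩ := h1
    have hearg : (e : ℝ) * θ = 2 * Real.pi * m := by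
      have h2 : ((e * θ : ℝ) : ℂ) * Complex.I = ((2 * Real.pi * m : ℝ) : ℂ) * Complex.I := by
        push_cast
        linear_combination hm
      have h3 := mul_right_cancel₀ Complex.I_ne_zero h2
      exact_mod_cast h3
    refine ⟨(m : ZMod e), ?_⟩
    have hcast : (((m : ZMod e).val : ℤ) : ZMod e) = ((m : ℤ) : ZMod e) := by
      push_cast
      rw [ZMod.natCast_rightInverse (m : ZMod e)]
    rw [ZMod.intCast_eq_intCast_iff] at hcast
    obtain ⟨k, hk⟩ := hcast.dvd
    have hval : ((( m : ZMod e).val : ℝ)) = (m : ℝ) - e * k := by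
      have := congrArg (fun z : ℤ => (z : ℝ)) hk
      push_cast at this ⊢
      linarith
    have hgrid : 2 * Real.pi * (((m : ZMod e).val : ℝ)) / e = θ - 2 * Real.pi * k := by
      rw [hval]
      field_simp
      nlinarith [hearg]
    have hgridC := congrArg (fun r : ℝ => (r : ℂ)) hgrid
    push_cast at hgridC
    rw [hax, Complex.exp_eq_exp_iff_exists_int]
    refine ⟨k, ?_⟩
    push_cast
    linear_combination (-Complex.I) * hgridC
  -- choose the phases
  have hph := fun (x : G) (χ : {χ // χ ∈ Γ}) => hphase χ.1 x
  choose q hq using hph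
  -- bucket width
  set K : ℕ := ⌊ε / (2 * Real.pi) * e⌋₊ + 1 with hKdef
  have hδpos : 0 ≤ ε / (2 * Real.pi) * e := by positivity
  have hK1 : ((K : ℝ)) - 1 ≤ ε / (2 * Real.pi) * e := by
    have := Nat.floor_le hδpos
    rw [hKdef]; push_cast; linarith
  have hK2 : ε / (2 * Real.pi) * e < K := by
    have := Nat.lt_floor_add_one (ε / (2 * Real.pi) * e)
    rw [hKdef]; push_cast; linarith
  have hKe : K ≤ e := by
    have hlt : ε / (2 * Real.pi) * e < e := by
      have : ε / (2 * Real.pi) < 1 := by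
        rw [div_lt_one (by positivity)]
        nlinarith [Real.pi_gt_three]
      nlinarith
    have : ⌊ε / (2 * Real.pi) * e⌋₊ < e := Nat.floor_lt hδpos |>.2 hlt
    omega
  have hKpos : 0 < K := Nat.succ_pos _
  -- closeness: same shifted box ⇒ character values are ε-close
  have hclose : ∀ (s : {χ // χ ∈ Γ} → ZMod e) (x y : G),
      (∀ χ : {χ // χ ∈ Γ}, (q x χ - s χ).val < K) →
      (∀ χ : {χ // χ ∈ Γ}, (q y χ - s χ).val < K) →
      ∀ χ ∈ Γ, ‖χ x - χ y‖ ≤ ε := by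
    intro s x y hx hy χ hχ
    have hqx : χ x = Complex.exp (2 * Real.pi * (((q x ⟨χ, hχ⟩).val : ℝ)) / e * Complex.I) :=
      hq x ⟨χ, hχ⟩
    have hqy : χ y = Complex.exp (2 * Real.pi * (((q y ⟨χ, hχ⟩).val : ℝ)) / e * Complex.I) :=
      hq y ⟨χ, hχ⟩
    have huK : (q x ⟨χ, hχ⟩ - s ⟨χ, hχ⟩).val < K := hx _
    have hvK : (q y ⟨χ, hχ⟩ - s ⟨χ, hχ⟩).val < K := hy _
    set α := q x ⟨χ, hχ⟩ with hα
    set β := q y ⟨χ, hχ⟩ with hβ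
    set u : ℕ := (α - s ⟨χ, hχ⟩).val with hu
    set v : ℕ := (β - s ⟨χ, hχ⟩).val with hv
    -- congruence: α.val - β.val ≡ u - v (mod e)
    have hcong : (((u : ℤ) - v : ℤ) : ZMod e) = (((α.val : ℤ) - β.val : ℤ) : ZMod e) := by
      push_cast
      rw [hu, hv, ZMod.natCast_rightInverse, ZMod.natCast_rightInverse,
        ZMod.natCast_rightInverse, ZMod.natCast_rightInverse]
      ring
    rw [ZMod.intCast_eq_intCast_iff] at hcong
    obtain ⟨k, hk⟩ := hcong.dvd
    set d : ℝ := 2 * Real.pi * ((u : ℝ) - v) / e with hd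
    have hkreal : ((α.val : ℝ)) - β.val = ((u : ℝ) - v) + e * k := by
      have := congrArg (fun z : ℤ => (z : ℝ)) hk
      push_cast at this ⊢
      linarith
    -- phase identity over ℝ
    have hre' : 2 * Real.pi * ((α.val : ℝ)) / e = (2 * Real.pi * ((β.val : ℝ)) / e + d) + 2 * Real.pi * k := by
      have hval : ((α.val : ℝ)) = ((β.val : ℝ)) + ((u : ℝ) - v) + e * k := by linarith
      rw [hd, hval]
      field_simp
    have hre'C := congrArg (fun r : ℝ => (r : ℂ)) hre'
    push_cast at hre'C
    have hper : Complex.exp (2 * Real.pi * ((α.val : ℝ)) / e * Complex.I)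
        = Complex.exp (2 * Real.pi * ((β.val : ℝ)) / e * Complex.I + (d : ℂ) * Complex.I) := by
      rw [Complex.exp_eq_exp_iff_exists_int]
      refine ⟨k, ?_⟩
      push_cast
      linear_combination Complex.I * hre'C
    have hmul : χ y * Complex.exp ((d : ℂ) * Complex.I) = χ x := by
      rw [hqx, hqy, ← Complex.exp_add, hper]
    have habs : ‖χ x - χ y‖ = ‖Complex.exp ((d : ℂ) * Complex.I) - 1‖ := by
      rw [← hmul, ← mul_sub_one, norm_mul, hnorm, one_mul]
    rw [habs]
    have hub : |(u : ℝ) - v| ≤ (K : ℝ) - 1 := by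
      have h1 : (u : ℝ) + 1 ≤ K := by exact_mod_cast huK
      have h2 : (v : ℝ) + 1 ≤ K := by exact_mod_cast hvK
      have h3 : (0 : ℝ) ≤ u := Nat.cast_nonneg u
      have h4 : (0 : ℝ) ≤ v := Nat.cast_nonneg v
      rw [abs_le]; constructor <;> linarith
    have hK1' : (1 : ℝ) ≤ K := by exact_mod_cast hKpos
    calc ‖Complex.exp ((d : ℂ) * Complex.I) - 1‖ ≤ |d| := chord_le_arc d
      _ ≤ 2 * Real.pi * ((K : ℝ) - 1) / e := by
          rw [hd, abs_div, abs_mul,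
            abs_of_pos (show (0:ℝ) < 2 * Real.pi by positivity), abs_of_pos hereal]
          gcongr
      _ ≤ ε := by
          rw [div_le_iff₀ hereal]
          have hm := mul_le_mul_of_nonneg_left hK1 (by positivity : (0:ℝ) ≤ 2 * Real.pi)
          have h2 : 2 * Real.pi * (ε / (2 * Real.pi) * e) = ε * e := by field_simp
          linarith
  -- counting: one-dimensional box count
  have hcount1 : ∀ a : ZMod e, Fintype.card {t : ZMod e // (a - t).val < K} = K := by
    intro a
    have e1 : {t : ZMod e // (a - t).val < K} ≃ {u : ZMod e // u.val < K} :=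
      (Equiv.subLeft a).subtypeEquiv (fun t => by simp)
    have e2 : {u : ZMod e // u.val < K} ≃ Fin K :=
      { toFun := fun u => ⟨u.1.val, u.2⟩
        invFun := fun j => ⟨((j : ℕ) : ZMod e), by
          rw [ZMod.val_cast_of_lt (lt_of_lt_of_le j.2 hKe)]; exact j.2⟩
        left_inv := fun u => Subtype.ext (ZMod.natCast_rightInverse u.1)
        right_inv := fun j => Fin.ext (ZMod.val_cast_of_lt (lt_of_lt_of_le j.2 hKe)) }
    rw [Fintype.card_congr (e1.trans e2), Fintype.card_fin]
  -- counting: each x lies in exactly K^n boxes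
  have hcountpi : ∀ x : G,
      (univ.filter fun s : {χ // χ ∈ Γ} → ZMod e => ∀ χ, (q x χ - s χ).val < K).card
        = K ^ Γ.card := by
    intro x
    rw [← Fintype.card_subtype]
    rw [Fintype.card_congr (Equiv.subtypePiEquivPi (p := fun χ t => (q x χ - t).val < K))]
    rw [Fintype.card_pi]
    simp only [hcount1]
    rw [Finset.prod_const, Finset.card_univ, Fintype.card_coe]
  -- double counting
  have htotal : ∑ s : ({χ // χ ∈ Γ} → ZMod e),
      ((univ.filter fun x : G => ∀ χ, (q x χ - s χ).val < K).card : ℝ)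
      = (Fintype.card G : ℝ) * (K : ℝ) ^ Γ.card := by
    have hnat : ∑ s : ({χ // χ ∈ Γ} → ZMod e),
        (univ.filter fun x : G => ∀ χ, (q x χ - s χ).val < K).card
        = Fintype.card G * K ^ Γ.card := by
      simp only [Finset.card_filter]
      rw [Finset.sum_comm]
      have hx : ∀ x : G, (∑ s : ({χ // χ ∈ Γ} → ZMod e),
          if (∀ χ, (q x χ - s χ).val < K) then 1 else 0) = K ^ Γ.card := by
        intro x
        rw [← Finset.card_filter]
        exact hcountpi x
      rw [Finset.sum_congr rfl fun x _ => hx x, Finset.sum_const, Finset.card_univ,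
        smul_eq_mul]
    rw [← Nat.cast_sum]
    exact_mod_cast congrArg (fun n : ℕ => (n : ℝ)) hnat
  have hcardshift : (Fintype.card ({χ // χ ∈ Γ} → ZMod e) : ℝ) = (e : ℝ) ^ Γ.card := by
    rw [Fintype.card_fun, ZMod.card, Fintype.card_coe]
    push_cast; ring
  have hGpos : (0 : ℝ) < Fintype.card G := by exact_mod_cast Fintype.card_pos
  -- averaging: some box is large
  obtain ⟨s₀, -, hs₀⟩ : ∃ s₀ ∈ (univ : Finset ({χ // χ ∈ Γ} → ZMod e)),
      (Fintype.card G : ℝ) * (K : ℝ) ^ Γ.card / (e : ℝ) ^ Γ.card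
        ≤ ((univ.filter fun x : G => ∀ χ, (q x χ - s₀ χ).val < K).card : ℝ) := by
    by_contra hcon
    push_neg at hcon
    have hsum : ∑ s : ({χ // χ ∈ Γ} → ZMod e),
        ((univ.filter fun x : G => ∀ χ, (q x χ - s χ).val < K).card : ℝ)
        < ∑ _s : ({χ // χ ∈ Γ} → ZMod e),
            (Fintype.card G : ℝ) * (K : ℝ) ^ Γ.card / (e : ℝ) ^ Γ.card := by
      apply Finset.sum_lt_sum_of_nonempty
      · haveI : Nonempty ({χ // χ ∈ Γ} → ZMod e) := ⟨fun _ => 0⟩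
        exact univ_nonempty
      · intro s hs; exact hcon s hs
    rw [htotal, Finset.sum_const, Finset.card_univ, nsmul_eq_mul, hcardshift,
      mul_div_cancel₀ _ (by positivity)] at hsum
    exact lt_irrefl _ hsum
  set F : Finset G := univ.filter fun x : G => ∀ χ, (q x χ - s₀ χ).val < K with hF
  have hfibpos : (0 : ℝ) < (F.card : ℝ) := lt_of_lt_of_le (by positivity) hs₀
  obtain ⟨x₀, hx₀⟩ : ∃ x₀, x₀ ∈ F := by
    apply Finset.Nonempty.exists_mem
    rw [← Finset.card_pos]
    exact_mod_cast hfibpos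
  set S : Set G := {x : G | ∀ χ ∈ Γ, ‖χ x - 1‖ ≤ ε} with hSdef
  -- map the box injectively into the Bohr set
  have hfib_le : (F.card : ℝ) ≤ (S.toFinset.card : ℝ) := by
    norm_cast
    apply Finset.card_le_card_of_injOn (fun y => y - x₀)
    · intro y hy
      rw [Finset.mem_coe, Set.mem_toFinset]
      intro χ hχ
      have hcl := hclose s₀ y x₀ (Finset.mem_filter.1 hy).2 (Finset.mem_filter.1 hx₀).2 χ hχ
      have hmul : χ x₀ * χ (y - x₀) = χ y := by
        rw [← AddChar.map_add_eq_mul]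
        congr 1
        abel
      calc ‖χ (y - x₀) - 1‖
          = ‖χ x₀‖ * ‖χ (y - x₀) - 1‖ := by rw [hnorm, one_mul]
        _ = ‖χ x₀ * (χ (y - x₀) - 1)‖ := (norm_mul _ _).symm
        _ = ‖χ y - χ x₀‖ := by rw [mul_sub, mul_one, hmul]
        _ ≤ ε := hcl
    · intro a _ b _ hab
      simpa using hab
  have hS_nat : (Nat.card S : ℝ) = (S.toFinset.card : ℝ) := by
    norm_cast
    rw [Nat.card_eq_fintype_card, Set.toFinset_card]
  calc (ε / (2 * Real.pi)) ^ Γ.card * (Fintype.card G : ℝ)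
      ≤ ((K : ℝ) / (e : ℝ)) ^ Γ.card * (Fintype.card G : ℝ) := by
        apply mul_le_mul_of_nonneg_right _ (le_of_lt hGpos)
        apply pow_le_pow_left₀ (by positivity)
        rw [div_le_div_iff₀ (by positivity) hereal]
        have hm := mul_le_mul_of_nonneg_left hK2.le (by positivity : (0:ℝ) ≤ 2 * Real.pi)
        have h2 : 2 * Real.pi * (ε / (2 * Real.pi) * e) = ε * e := by field_simp
        linarith
    _ = (Fintype.card G : ℝ) * (K : ℝ) ^ Γ.card / (e : ℝ) ^ Γ.card := by
        rw [div_pow]; ring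
    _ ≤ (F.card : ℝ) := hs₀
    _ ≤ (S.toFinset.card : ℝ) := hfib_le
    _ = (Nat.card S : ℝ) := hS_nat.symm
end

section
/- Let X, Y, Z be nonempty subsets of F_p and δ ∈ (0, 1) such that no element of Z lies in X +_δ Y (i.e., every z ∈ Z has fewer than δp representations z = x + y with x ∈ X, y ∈ Y). Assume |X| ≥ εp for some ε ∈ (0, 1), and let T > 1. Then there exists X' ⊆ X with |X'| ≤ |X|/T such that no element of X \ X' lies in Z −_{δT/ε} Y. -/
theorem stmt8 (p : ℕ) [Fact p.Prime] (X Y Z : Finset (ZMod p))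
    (hX : X.Nonempty) (hY : Y.Nonempty) (hZ : Z.Nonempty)
    (δ ε T : ℝ) (hδ : δ ∈ Set.Ioo (0 : ℝ) 1) (hε : ε ∈ Set.Ioo (0 : ℝ) 1) (hT : 1 < T)
    (hXcard : ε * p ≤ X.card)
    (hZXY : ∀ z ∈ Z, (((X ×ˢ Y).filter (fun q => q.1 + q.2 = z)).card : ℝ) < δ * p) :
    ∃ X' ⊆ X, (X'.card : ℝ) ≤ (X.card : ℝ) / T ∧
      ∀ x ∈ X \ X', (((Z ×ˢ Y).filter (fun q => q.1 - q.2 = x)).card : ℝ) < (δ * T / ε) * p := by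
  obtain ⟨hδ0, hδ1⟩ := hδ
  obtain ⟨hε0, hε1⟩ := hε
  have hp : 0 < (p : ℝ) := by exact_mod_cast (Fact.out : p.Prime).pos
  have hT0 : 0 < T := lt_trans one_pos hT
  set X' := X.filter (fun x => (δ * T / ε) * p ≤ (((Z ×ˢ Y).filter (fun q => q.1 - q.2 = x)).card : ℝ)) with hX'
  refine ⟨X', Finset.filter_subset _ _, ?_, ?_⟩
  · -- counting
    have hcount : ∑ x ∈ X', ((Z ×ˢ Y).filter (fun q => q.1 - q.2 = x)).card
        = ∑ z ∈ Z, ((X' ×ˢ Y).filter (fun q => q.1 + q.2 = z)).card := by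
      have hiff : ∀ z y x : ZMod p, (z - y = x) ↔ (x + y = z) :=
        fun z y x => ⟨fun h => by rw [← h]; ring, fun h => by rw [← h]; ring⟩
      simp only [Finset.card_filter, Finset.sum_product]
      rw [Finset.sum_comm]
      simp only [hiff]
    -- lower bound on the sum
    have hlow : (X'.card : ℝ) * ((δ * T / ε) * p)
        ≤ ∑ x ∈ X', (((Z ×ˢ Y).filter (fun q => q.1 - q.2 = x)).card : ℝ) := by
      rw [Finset.card_eq_sum_ones X', Nat.cast_sum]
      push_cast
      rw [Finset.sum_mul]
      apply Finset.sum_le_sum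
      intro x hx
      rw [one_mul]
      exact (Finset.mem_filter.mp hx).2
    have hupper : ∑ z ∈ Z, (((X' ×ˢ Y).filter (fun q => q.1 + q.2 = z)).card : ℝ)
        ≤ (p : ℝ) * (δ * p) := by
      calc ∑ z ∈ Z, (((X' ×ˢ Y).filter (fun q => q.1 + q.2 = z)).card : ℝ)
          ≤ ∑ z ∈ Z, (((X ×ˢ Y).filter (fun q => q.1 + q.2 = z)).card : ℝ) := by
            apply Finset.sum_le_sum
            intro z hz
            exact_mod_cast Finset.card_le_card (Finset.filter_subset_filter _
              (Finset.product_subset_product_left (Finset.filter_subset _ _)))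
        _ ≤ ∑ z ∈ Z, δ * (p : ℝ) := Finset.sum_le_sum fun z hz => le_of_lt (hZXY z hz)
        _ = (Z.card : ℝ) * (δ * p) := by rw [Finset.sum_const, nsmul_eq_mul]
        _ ≤ (p : ℝ) * (δ * p) := by
            apply mul_le_mul_of_nonneg_right _ (by positivity)
            exact_mod_cast le_trans (Finset.card_le_card (Finset.subset_univ Z))
              (le_of_eq (by simp [ZMod.card]))
    have key : (X'.card : ℝ) * ((δ * T / ε) * p) ≤ (p : ℝ) * (δ * p) := by
      refine le_trans hlow (le_trans ?_ hupper)
      rw [← Nat.cast_sum, ← Nat.cast_sum, hcount]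
    -- conclude
    have key2 : (X'.card : ℝ) * (δ * T * p) ≤ (p : ℝ) * (δ * p) * ε := by
      have h := mul_le_mul_of_nonneg_right key hε0.le
      calc (X'.card : ℝ) * (δ * T * p) = (X'.card : ℝ) * (δ * T / ε * p) * ε := by
            field_simp
        _ ≤ _ := h
    have h1 : (X'.card : ℝ) ≤ ε * p / T := by
      rw [le_div_iff₀ hT0]
      have hdp : 0 < δ * (p : ℝ) := by positivity
      rw [← mul_le_mul_iff_of_pos_right hdp]
      nlinarith [key2]
    calc (X'.card : ℝ) ≤ ε * p / T := h1
      _ ≤ (X.card : ℝ) / T := by gcongr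
  · intro x hx
    rw [Finset.mem_sdiff, hX'] at hx
    obtain ⟨hxX, hxX'⟩ := hx
    by_contra h
    exact hxX' (Finset.mem_filter.mpr ⟨hxX, not_lt.mp h⟩)
end

section
/- Let G be a finite abelian group, A ⊆ G nonempty, and ε ∈ (0, 1]. Then the additive dimension of the spectrum Spec_ε(A) = {χ : |Â(χ)| ≥ ε|A|} is at most 2ε^{-2} log₂(|G|/|A|). -/
open Finset Real
open scoped BigOperators ComplexConjugate

lemma log_taylor_lb (t : ℝ) (h0 : 0 ≤ t) (h1 : t ≤ 1/2) :
    t - t^2/2 + t^3/3 - t^4/4 + t^5/5 - 2*t^6 ≤ Real.log (1+t) ∧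
    -t - t^2/2 - t^3/3 - t^4/4 - t^5/5 - 2*t^6 ≤ Real.log (1-t) := by
  have habs : |(-t)| < 1 := by rw [abs_neg, abs_of_nonneg h0]; linarith
  have habs' : |t| < 1 := by rw [abs_of_nonneg h0]; linarith
  have h1' := Real.abs_log_sub_add_sum_range_le habs 5
  have h2' := Real.abs_log_sub_add_sum_range_le habs' 5
  rw [abs_neg] at h1'; rw [abs_of_nonneg h0] at h1' h2'
  simp [Finset.sum_range_succ] at h1' h2'
  have hd : t^6/(1-t) ≤ 2*t^6 := by
    rw [div_le_iff₀ (by linarith)]; nlinarith [pow_nonneg h0 6]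
  constructor
  · have := (abs_le.1 h1').1
    nlinarith [this]
  · have := (abs_le.1 h2').1
    nlinarith [this]

lemma key_ineq (ε : ℝ) (h0 : 0 < ε) (h1 : ε ≤ 1) :
    ε^2 * Real.log 2 ≤ (1+ε) * Real.log (1+ε/2) + (1-ε) * Real.log (1-ε/2) := by
  obtain ⟨hl1, hl2⟩ := log_taylor_lb (ε/2) (by linarith) (by linarith)
  have hlog2 : Real.log 2 < 0.6931471808 := Real.log_two_lt_d9
  have hc1 : (0:ℝ) ≤ 1 + ε := by linarith
  have hc2 : (0:ℝ) ≤ 1 - ε := by linarith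
  nlinarith [mul_le_mul_of_nonneg_left hl1 hc1, mul_le_mul_of_nonneg_left hl2 hc2,
    sq_nonneg ε, sq_nonneg (ε^2), mul_pos h0 h0, pow_pos h0 2, pow_pos h0 4,
    mul_le_mul_of_nonneg_left h1 (le_of_lt (pow_pos h0 4)),
    mul_le_of_le_one_right (sq_nonneg ε) (by nlinarith : ε^2 ≤ 1)]


-- chord bound: for |x| ≤ t < 1,  exp of the chord values ≤ 1 + x
lemma chord_bound (t x : ℝ) (ht0 : 0 < t) (ht1 : t < 1) (hx : |x| ≤ t) :
    Real.exp ((1 - x/t)/2 * Real.log (1-t) + (1 + x/t)/2 * Real.log (1+t)) ≤ 1 + x := by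
  obtain ⟨hx1, hx2⟩ := abs_le.1 hx
  have h1t : (0:ℝ) < 1 - t := by linarith
  have h2t : (0:ℝ) < 1 + t := by linarith
  have hw1 : (0:ℝ) ≤ (1 - x/t)/2 := by
    have : x/t ≤ 1 := (div_le_one ht0).2 hx2
    linarith
  have hw2 : (0:ℝ) ≤ (1 + x/t)/2 := by
    have : -1 ≤ x/t := by rw [neg_le, ← neg_div]; exact (div_le_one ht0).2 (by linarith)
    linarith
  have key := Real.geom_mean_le_arith_mean2_weighted hw1 hw2 h1t.le h2t.le (by ring)
  have e1 : (1-t) ^ ((1 - x/t)/2) = Real.exp ((1 - x/t)/2 * Real.log (1-t)) := by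
    rw [Real.rpow_def_of_pos h1t, mul_comm]
  have e2 : (1+t) ^ ((1 + x/t)/2) = Real.exp ((1 + x/t)/2 * Real.log (1+t)) := by
    rw [Real.rpow_def_of_pos h2t, mul_comm]
  rw [e1, e2, ← Real.exp_add] at key
  refine key.trans_eq ?_
  field_simp
  ring

/-- Chang's theorem: any dissociated subset `Λ` of the `ε`-spectrum of `A`
has size at most `2 ε⁻² log₂(|G|/|A|)`. -/
theorem stmt9 {G : Type*} [AddCommGroup G] [Fintype G]
    (A : Finset G) (hA : A.Nonempty) (ε : ℝ) (hε : ε ∈ Set.Ioc (0 : ℝ) 1)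
    (Λ : Finset (AddChar G ℂ))
    (hΛspec : ∀ χ ∈ Λ, ε * A.card ≤ ‖∑ a ∈ A, (starRingEnd ℂ) (χ a)‖)
    (hdiss : ∀ P N : Finset (AddChar G ℂ), P ⊆ Λ → N ⊆ Λ → Disjoint P N →
      (∏ χ ∈ P, χ) = (∏ χ ∈ N, χ) → P = ∅ ∧ N = ∅) :
    (Λ.card : ℝ) ≤ 2 * ε⁻¹ ^ 2 * Real.logb 2 ((Fintype.card G : ℝ) / A.card) := by
  classical
  obtain ⟨hε0, hε1⟩ := hε
  set t : ℝ := ε/2 with ht_def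
  have ht0 : 0 < t := by positivity
  have ht1 : t < 1 := by rw [ht_def]; linarith
  set S : AddChar G ℂ → ℂ := fun χ => ∑ a ∈ A, (starRingEnd ℂ) (χ a) with hS_def
  have hA0 : (0:ℝ) < A.card := by exact_mod_cast hA.card_pos
  have hSpos : ∀ χ ∈ Λ, 0 < ‖S χ‖ := fun χ hχ =>
    lt_of_lt_of_le (by positivity) (hΛspec χ hχ)
  set d : AddChar G ℂ → ℂ := fun χ =>
    if χ ∈ Λ then (t:ℂ) * S χ / ((‖S χ‖ : ℝ) : ℂ) else 0 with hd_def
  -- support of d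
  have hdsupp : {χ : AddChar G ℂ | d χ ≠ 0} = (Λ : Set (AddChar G ℂ)) := by
    ext χ
    simp only [hd_def, Set.mem_setOf_eq, Finset.coe_mem, Finset.mem_coe]
    constructor
    · intro h; by_contra hχ; simp [hχ] at h
    · intro hχ
      have h1 := hSpos χ hχ
      simp only [if_pos hχ]
      intro h
      rw [div_eq_zero_iff] at h
      rcases h with h | h
      · rcases mul_eq_zero.1 h with h | h
        · exact absurd (Complex.ofReal_eq_zero.1 h) (ne_of_gt ht0)
        · rw [h] at h1; simp at h1
      · rw [Complex.ofReal_eq_zero] at h; rw [h] at h1; simp at h1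
  -- dissociation
  have hΛdiss : AddDissociated (Λ : Set (AddChar G ℂ)) := by
    rintro t₁ ht₁ t₂ ht₂ h
    simp only [Set.mem_setOf_eq] at ht₁ ht₂
    have h' : ∑ x ∈ t₁ \ t₂, x = ∑ x ∈ t₂ \ t₁, x :=
      Finset.sum_sdiff_eq_sum_sdiff_iff.2 h
    obtain ⟨h1, h2⟩ := hdiss (t₁ \ t₂) (t₂ \ t₁)
      ((Finset.sdiff_subset).trans (Finset.coe_subset.1 ht₁))
      ((Finset.sdiff_subset).trans (Finset.coe_subset.1 ht₂))
      (disjoint_sdiff_sdiff) h'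
    exact Finset.Subset.antisymm (Finset.sdiff_eq_empty_iff_subset.1 h1)
      (Finset.sdiff_eq_empty_iff_subset.1 h2)
  -- randomisation
  have hrand : 𝔼 a, ∏ ψ : AddChar G ℂ, ((1:ℝ) + (d ψ * ψ a).re) = 1 := by
    have := AddDissociated.randomisation (fun _ => (1:ℝ)) d (hdsupp ▸ hΛdiss)
    simpa using this

  -- product over univ = product over Λ
  have hprodΛ : ∀ a : G, ∏ ψ : AddChar G ℂ, ((1:ℝ) + (d ψ * ψ a).re)
      = ∏ ψ ∈ Λ, ((1:ℝ) + (d ψ * ψ a).re) :=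
    fun a => (Finset.prod_subset (Finset.subset_univ Λ)
      (fun ψ _ hψ => by simp [hd_def, hψ])).symm
  have hcardG : (0:ℝ) < Fintype.card G := by
    have : 0 < Fintype.card G := Fintype.card_pos
    exact_mod_cast this
  have hsum_eq : ∑ a : G, ∏ ψ ∈ Λ, ((1:ℝ) + (d ψ * ψ a).re) = Fintype.card G := by
    rw [Fintype.expect_eq_sum_div_card, div_eq_one_iff_eq (ne_of_gt hcardG)] at hrand
    simp_rw [hprodΛ] at hrand
    exact hrand
  -- bound on each x
  have habs_x : ∀ χ ∈ Λ, ∀ a : G, |(d χ * χ a).re| ≤ t := by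
    intro χ hχ a
    have hna : ‖χ a‖ = 1 := by
      exact AddChar.norm_apply χ a
    have h1 : ‖d χ * χ a‖ = t := by
      rw [norm_mul, hna, mul_one, hd_def]
      simp only [if_pos hχ]
      rw [norm_div, norm_mul, Complex.norm_of_nonneg ht0.le,
        Complex.norm_of_nonneg (norm_nonneg _)]
      rw [mul_div_assoc, div_self (ne_of_gt (hSpos χ hχ)), mul_one]
    calc |(d χ * χ a).re| ≤ ‖d χ * χ a‖ := Complex.abs_re_le_norm _
      _ = t := h1
  -- sum of x over A
  have hsum_x : ∀ χ ∈ Λ, ∑ a ∈ A, (d χ * χ a).re = t * ‖S χ‖ := by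
    intro χ hχ
    have h1 : ∑ a ∈ A, (d χ * χ a) = d χ * (starRingEnd ℂ) (S χ) := by
      rw [← Finset.mul_sum]
      congr 1
      rw [hS_def]
      simp only [map_sum, Complex.conj_conj]
    have h2 : d χ * (starRingEnd ℂ) (S χ) = ((t * ‖S χ‖ : ℝ) : ℂ) := by
      rw [hd_def]
      simp only [if_pos hχ]
      rw [div_mul_eq_mul_div, mul_assoc, Complex.mul_conj]
      rw [Complex.normSq_eq_norm_sq]
      have hne : ((‖S χ‖ : ℝ) : ℂ) ≠ 0 := by
        exact_mod_cast ne_of_gt (hSpos χ hχ)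
      push_cast
      field_simp
    calc ∑ a ∈ A, (d χ * χ a).re = (∑ a ∈ A, d χ * χ a).re := by
          rw [Complex.re_sum]
      _ = t * ‖S χ‖ := by rw [h1, h2, Complex.ofReal_re]
  -- main quantities
  set L1 : ℝ := Real.log (1 - t) with hL1
  set L2 : ℝ := Real.log (1 + t) with hL2
  set q : G → ℝ := fun a => ∑ χ ∈ Λ,
    ((1 - (d χ * χ a).re/t)/2 * L1 + (1 + (d χ * χ a).re/t)/2 * L2) with hq_def
  have hq_le_F : ∀ a : G, Real.exp (q a) ≤ ∏ ψ ∈ Λ, ((1:ℝ) + (d ψ * ψ a).re) := by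
    intro a
    simp only [hq_def]
    rw [Real.exp_sum]
    refine Finset.prod_le_prod (fun χ _ => (Real.exp_pos _).le) ?_
    intro χ hχ
    exact chord_bound t _ ht0 ht1 (habs_x χ hχ a)
  have hL12 : L1 ≤ L2 := by
    rw [hL1, hL2]
    exact Real.log_le_log (by linarith) (by linarith)
  -- per-character lower bound on the sum over A of chord exponents
  have hterm : ∀ χ ∈ Λ, (A.card:ℝ) * (ε^2 * Real.log 2/2)
      ≤ ∑ a ∈ A, ((1 - (d χ * χ a).re/t)/2 * L1 + (1 + (d χ * χ a).re/t)/2 * L2) := by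
    intro χ hχ
    have hsx := hsum_x χ hχ
    have hSle : ε * A.card ≤ ‖S χ‖ := hΛspec χ hχ
    have hrw : ∀ x : ℝ, (1 - x/t)/2 * L1 + (1 + x/t)/2 * L2
        = (L1+L2)/2 + x * ((L2-L1)/(2*t)) := by
      intro x; field_simp; ring
    simp_rw [hrw]
    rw [Finset.sum_add_distrib, Finset.sum_const, ← Finset.sum_mul, hsx]
    have h2 : (t * ‖S χ‖) * ((L2-L1)/(2*t))
        = ‖S χ‖ * ((L2-L1)/2) := by
      field_simp
    rw [h2]
    have hk := key_ineq ε hε0 hε1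
    rw [← hL2, ← hL1] at hk
    have h3 : ε * (A.card:ℝ) * ((L2-L1)/2) ≤ ‖S χ‖ * ((L2-L1)/2) :=
      mul_le_mul_of_nonneg_right hSle (by linarith)
    have h4 : (A.card • ((L1+L2)/2) : ℝ) = (A.card:ℝ) * ((L1+L2)/2) := by
      rw [nsmul_eq_mul]
    rw [h4]
    nlinarith [hA0]
  -- sum of q over A
  set C : ℝ := (Λ.card:ℝ) * (ε^2 * Real.log 2/2) with hC_def
  have hQ : (A.card:ℝ) * C ≤ ∑ a ∈ A, q a := by
    simp only [hq_def]
    rw [Finset.sum_comm]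
    calc (A.card:ℝ) * C = ∑ _χ ∈ Λ, (A.card:ℝ) * (ε^2 * Real.log 2/2) := by
          rw [Finset.sum_const, hC_def, nsmul_eq_mul]; ring
      _ ≤ _ := Finset.sum_le_sum hterm
  -- tangent line trick for exp
  have hexp_sum : (A.card:ℝ) * Real.exp C ≤ ∑ a ∈ A, Real.exp (q a) := by
    have h1 : ∀ a ∈ A, Real.exp C * (1 + (q a - C)) ≤ Real.exp (q a) := by
      intro a _
      have := Real.add_one_le_exp (q a - C)
      calc Real.exp C * (1 + (q a - C)) = Real.exp C * ((q a - C) + 1) := by ring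
        _ ≤ Real.exp C * Real.exp (q a - C) :=
            mul_le_mul_of_nonneg_left this (Real.exp_pos _).le
        _ = Real.exp (q a) := by rw [← Real.exp_add]; ring_nf
    calc (A.card:ℝ) * Real.exp C
        = Real.exp C * ((A.card:ℝ) + ((∑ a ∈ A, q a) - (A.card:ℝ) * C))
          - Real.exp C * ((∑ a ∈ A, q a) - (A.card:ℝ) * C) := by ring
      _ ≤ Real.exp C * ((A.card:ℝ) + ((∑ a ∈ A, q a) - (A.card:ℝ) * C)) := by
          have : 0 ≤ (∑ a ∈ A, q a) - (A.card:ℝ) * C := by linarith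
          nlinarith [Real.exp_pos C]
      _ = ∑ a ∈ A, Real.exp C * (1 + (q a - C)) := by
          rw [← Finset.mul_sum, Finset.sum_add_distrib, Finset.sum_sub_distrib,
            Finset.sum_const, Finset.sum_const, nsmul_eq_mul, nsmul_eq_mul]
          ring
      _ ≤ ∑ a ∈ A, Real.exp (q a) := Finset.sum_le_sum h1
  -- combine
  have hFpos : ∀ a : G, 0 ≤ ∏ ψ ∈ Λ, ((1:ℝ) + (d ψ * ψ a).re) := fun a =>
    Finset.prod_nonneg fun χ hχ => by
      have := (abs_le.1 (habs_x χ hχ a)).1; linarith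
  have hAF : ∑ a ∈ A, (∏ ψ ∈ Λ, ((1:ℝ) + (d ψ * ψ a).re)) ≤ (Fintype.card G : ℝ) := by
    rw [← hsum_eq]
    exact Finset.sum_le_sum_of_subset_of_nonneg (Finset.subset_univ A)
      (fun a _ _ => hFpos a)
  have hfinal : (A.card:ℝ) * Real.exp C ≤ (Fintype.card G : ℝ) :=
    le_trans (le_trans hexp_sum (Finset.sum_le_sum (fun a _ => hq_le_F a))) hAF
  have hC_le : C ≤ Real.log ((Fintype.card G : ℝ) / A.card) := by
    rw [Real.le_log_iff_exp_le (div_pos hcardG hA0), le_div_iff₀ hA0]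
    linarith [hfinal]
  have hlog2 : 0 < Real.log 2 := Real.log_pos (by norm_num)
  have hε2 : (0:ℝ) < ε^2 := by positivity
  calc (Λ.card:ℝ) = C * (2/(ε^2*Real.log 2)) := by
        rw [hC_def]; field_simp
    _ ≤ Real.log ((Fintype.card G : ℝ) / A.card) * (2/(ε^2*Real.log 2)) :=
        mul_le_mul_of_nonneg_right hC_le (by positivity)
    _ = 2 * ε⁻¹ ^ 2 * Real.logb 2 ((Fintype.card G : ℝ) / A.card) := by
        rw [Real.logb]; field_simp
end

section
/- Let G be a finite abelian group, A ⊆ G with |A| = α|G|, B ⊆ G with |B| = β|G|, and let Λ be a finite set of characters such that every χ ∈ Spec_ε(A) is of the form Σ_{λ∈Λ} ξ_λ λ with ξ_λ ∈ {0, 1, −1}. Let ζ > 0 and let B̃ = Bohr(Λ, ζ/|Λ|). Define g(x) = (1/|G|) Σ_{χ ∈ Spec_ε(A)} Â(χ)B̂(χ) χ(x). Then for every b ∈ B̃ and x ∈ G, |g(x + b) − g(x)| ≤ √(αβ) · ζ · |G|. -/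
open Finset Complex

-- product closeness helper
lemma prod_close {G : Type*} [AddCommGroup G] [Finite G]
    (s : Finset (AddChar G ℂ)) (b : G) (c : ℝ)
    (h : ∀ lam ∈ s, ‖lam b - 1‖ ≤ c) :
    ‖(∏ lam ∈ s, lam) b - 1‖ ≤ s.card * c := by
  classical
  induction s using Finset.induction_on with
  | empty => simp
  | @insert a s ha ih =>
    rw [Finset.prod_insert ha, AddChar.mul_apply]
    have h1 : ‖a b * (∏ lam ∈ s, lam) b - 1‖
        ≤ ‖a b * ((∏ lam ∈ s, lam) b - 1)‖ + ‖a b - 1‖ := by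
      have : a b * (∏ lam ∈ s, lam) b - 1
          = a b * ((∏ lam ∈ s, lam) b - 1) + (a b - 1) := by ring
      rw [this]; exact norm_add_le _ _
    have habs : ‖a b‖ = 1 := AddChar.norm_apply a b
    rw [norm_mul, habs, one_mul] at h1
    have h2 := ih (fun lam hl => h lam (Finset.mem_insert_of_mem hl))
    have h3 := h a (Finset.mem_insert_self a s)
    rw [Finset.card_insert_of_notMem ha]
    calc ‖a b * (∏ lam ∈ s, lam) b - 1‖
        ≤ ‖(∏ lam ∈ s, lam) b - 1‖ + ‖a b - 1‖ := h1
      _ ≤ s.card * c + c := add_le_add h2 h3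
      _ = (s.card + 1 : ℕ) * c := by push_cast; ring

lemma parseval {G : Type*} [AddCommGroup G] [Fintype G] [inst : Fintype (AddChar G ℂ)]
    (A : Finset G) :
    ∑ χ : AddChar G ℂ, (‖∑ a ∈ A, (starRingEnd ℂ) (χ a)‖)^2
      = A.card * Fintype.card G := by
  classical
  have hi : inst = AddChar.instFintype G ℂ := Subsingleton.elim _ _
  subst hi
  have key : ∑ χ : AddChar G ℂ, ((∑ a ∈ A, (starRingEnd ℂ) (χ a)) *
      (starRingEnd ℂ) (∑ a ∈ A, (starRingEnd ℂ) (χ a))) = ((A.card * Fintype.card G : ℝ) : ℂ) := by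
    simp_rw [map_sum, Complex.conj_conj, Finset.sum_mul_sum]
    rw [Finset.sum_comm]
    have this1 : ∀ a ∈ A, ∑ χ : AddChar G ℂ, ∑ a' ∈ A, (starRingEnd ℂ) (χ a) * χ a'
        = (Fintype.card G : ℂ) := by
      intro a ha
      rw [Finset.sum_comm]
      have inner : ∀ a' : G, ∑ χ : AddChar G ℂ, (starRingEnd ℂ) (χ a) * χ a'
          = if a' - a = 0 then (Fintype.card G : ℂ) else 0 := by
        intro a'
        rw [← AddChar.sum_apply_eq_ite]
        refine Finset.sum_congr rfl fun χ _ => ?_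
        rw [← AddChar.map_neg_eq_conj, ← AddChar.map_add_eq_mul, neg_add_eq_sub]
      simp_rw [inner, sub_eq_zero]
      rw [Finset.sum_ite_eq' A a fun _ => (Fintype.card G : ℂ)]
      simp [ha]
    rw [Finset.sum_congr rfl this1, Finset.sum_const, nsmul_eq_mul]
    push_cast; ring
  have h2 : ∀ χ : AddChar G ℂ, ((∑ a ∈ A, (starRingEnd ℂ) (χ a)) *
      (starRingEnd ℂ) (∑ a ∈ A, (starRingEnd ℂ) (χ a)))
      = (((‖∑ a ∈ A, (starRingEnd ℂ) (χ a)‖)^2 : ℝ) : ℂ) := by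
    intro χ
    rw [Complex.mul_conj]
    norm_cast
    rw [Complex.sq_norm]
  simp_rw [h2] at key
  exact_mod_cast key
theorem stmt13 {G : Type*} [AddCommGroup G] [Fintype G] [Fintype (AddChar G ℂ)]
    (A B : Finset G) (α β ε ζ : ℝ)
    (hα : (A.card : ℝ) = α * Fintype.card G) (hβ : (B.card : ℝ) = β * Fintype.card G)
    (hε : 0 < ε) (hζ : 0 < ζ)
    (Λ : Finset (AddChar G ℂ)) (hΛ : Λ.Nonempty)
    (hspan : ∀ χ ∈ Finset.univ.filter (fun χ : AddChar G ℂ =>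
        ε * A.card ≤ ‖∑ a ∈ A, (starRingEnd ℂ) (χ a)‖),
      ∃ P N : Finset (AddChar G ℂ), P ⊆ Λ ∧ N ⊆ Λ ∧ Disjoint P N ∧
        χ * ∏ lam ∈ N, lam = ∏ lam ∈ P, lam)
    (g : G → ℂ)
    (hg : ∀ x, g x = (1 / (Fintype.card G : ℂ)) *
      ∑ χ ∈ Finset.univ.filter (fun χ : AddChar G ℂ =>
          ε * A.card ≤ ‖∑ a ∈ A, (starRingEnd ℂ) (χ a)‖),
        ((∑ a ∈ A, (starRingEnd ℂ) (χ a)) * (∑ b ∈ B, (starRingEnd ℂ) (χ b))) * χ x) :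
    ∀ b ∈ {z : G | ∀ lam ∈ Λ, ‖lam z - 1‖ ≤ ζ / Λ.card}, ∀ x : G,
      ‖g (x + b) - g x‖ ≤ Real.sqrt (α * β) * ζ * Fintype.card G := by
  classical
  intro b hb x
  simp only [Set.mem_setOf_eq] at hb
  set S := Finset.univ.filter (fun χ : AddChar G ℂ =>
      ε * A.card ≤ ‖∑ a ∈ A, (starRingEnd ℂ) (χ a)‖) with hS
  set Fa : AddChar G ℂ → ℂ := fun χ => ∑ a ∈ A, (starRingEnd ℂ) (χ a) with hFa
  set Fb : AddChar G ℂ → ℂ := fun χ => ∑ b' ∈ B, (starRingEnd ℂ) (χ b') with hFb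
  have hGpos : (0 : ℝ) < Fintype.card G := by exact_mod_cast Fintype.card_pos
  have hGne : (Fintype.card G : ℝ) ≠ 0 := ne_of_gt hGpos
  have hα0 : 0 ≤ α := by nlinarith [(Nat.cast_nonneg A.card : (0:ℝ) ≤ (A.card:ℝ))]
  have hβ0 : 0 ≤ β := by nlinarith [(Nat.cast_nonneg B.card : (0:ℝ) ≤ (B.card:ℝ))]
  have hΛpos : (0 : ℝ) < Λ.card := by exact_mod_cast Finset.card_pos.2 hΛ
  -- character value bound
  have hchib : ∀ χ ∈ S, ‖χ b - 1‖ ≤ ζ := by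
    intro χ hχ
    obtain ⟨P, N, hP, hN, hdis, heq⟩ := hspan χ hχ
    have hPb := prod_close P b (ζ / Λ.card) (fun lam hl => hb lam (hP hl))
    have hNb := prod_close N b (ζ / Λ.card) (fun lam hl => hb lam (hN hl))
    have heqb : χ b * (∏ lam ∈ N, lam) b = (∏ lam ∈ P, lam) b := by
      rw [← AddChar.mul_apply, heq]
    have hNabs : ‖(∏ lam ∈ N, lam) b‖ = 1 := by
      exact AddChar.norm_apply _ b
    have hkey : ‖χ b - 1‖
        = ‖(∏ lam ∈ P, lam) b - (∏ lam ∈ N, lam) b‖ := by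
      rw [← heqb, show χ b * (∏ lam ∈ N, lam) b - (∏ lam ∈ N, lam) b
          = (χ b - 1) * (∏ lam ∈ N, lam) b by ring, norm_mul, hNabs, mul_one]
    rw [hkey]
    have hcard : (P.card : ℝ) + N.card ≤ Λ.card := by
      have := Finset.card_le_card (Finset.union_subset hP hN)
      rw [Finset.card_union_of_disjoint hdis] at this
      exact_mod_cast this
    calc ‖(∏ lam ∈ P, lam) b - (∏ lam ∈ N, lam) b‖
        ≤ ‖(∏ lam ∈ P, lam) b - 1‖
          + ‖(∏ lam ∈ N, lam) b - 1‖ := by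
          rw [show ((∏ lam ∈ P, lam) b - (∏ lam ∈ N, lam) b)
              = ((∏ lam ∈ P, lam) b - 1) - ((∏ lam ∈ N, lam) b - 1) by ring]
          exact (norm_sub_le_norm_sub_add_norm_sub _ (0:ℂ) _).trans (by rw [sub_zero, zero_sub, norm_neg])
      _ ≤ P.card * (ζ / Λ.card) + N.card * (ζ / Λ.card) := add_le_add hPb hNb
      _ = ((P.card : ℝ) + N.card) * (ζ / Λ.card) := by ring
      _ ≤ Λ.card * (ζ / Λ.card) :=
          mul_le_mul_of_nonneg_right hcard (div_nonneg hζ.le hΛpos.le)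
      _ = ζ := by field_simp
  -- difference formula
  have hdiff : g (x + b) - g x
      = (1 / (Fintype.card G : ℂ)) * ∑ χ ∈ S, (Fa χ * Fb χ) * (χ x * (χ b - 1)) := by
    rw [hg, hg, ← mul_sub, ← Finset.sum_sub_distrib]
    congr 1
    refine Finset.sum_congr rfl fun χ _ => ?_
    rw [AddChar.map_add_eq_mul]
    ring
  -- Cauchy–Schwarz bound
  have hCS : ∑ χ : AddChar G ℂ, ‖Fa χ‖ * ‖Fb χ‖
      ≤ Real.sqrt (α * β) * (Fintype.card G : ℝ) ^ 2 := by
    have h1 := Finset.sum_mul_sq_le_sq_mul_sq Finset.univ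
      (fun χ : AddChar G ℂ => ‖Fa χ‖) (fun χ => ‖Fb χ‖)
    have hpa := parseval A
    have hpb := parseval B
    have h2 : (∑ χ : AddChar G ℂ, ‖Fa χ‖ * ‖Fb χ‖) ^ 2
        ≤ α * β * (Fintype.card G : ℝ) ^ 4 := by
      calc (∑ χ : AddChar G ℂ, ‖Fa χ‖ * ‖Fb χ‖) ^ 2
          ≤ (∑ χ : AddChar G ℂ, ‖Fa χ‖ ^ 2)
            * (∑ χ : AddChar G ℂ, ‖Fb χ‖ ^ 2) := h1
        _ = (A.card * Fintype.card G) * (B.card * Fintype.card G) := by rw [hpa, hpb]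
        _ = α * β * (Fintype.card G : ℝ) ^ 4 := by rw [hα, hβ]; ring
    have hnn : 0 ≤ ∑ χ : AddChar G ℂ, ‖Fa χ‖ * ‖Fb χ‖ :=
      Finset.sum_nonneg fun χ _ => mul_nonneg (norm_nonneg _) (norm_nonneg _)
    have hsq : (Real.sqrt (α * β) * (Fintype.card G : ℝ) ^ 2) ^ 2
        = α * β * (Fintype.card G : ℝ) ^ 4 := by
      rw [mul_pow, Real.sq_sqrt (mul_nonneg hα0 hβ0)]; ring
    calc ∑ χ : AddChar G ℂ, ‖Fa χ‖ * ‖Fb χ‖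
        = Real.sqrt ((∑ χ : AddChar G ℂ, ‖Fa χ‖ * ‖Fb χ‖) ^ 2) :=
          (Real.sqrt_sq hnn).symm
      _ ≤ Real.sqrt (α * β * (Fintype.card G : ℝ) ^ 4) := Real.sqrt_le_sqrt h2
      _ = Real.sqrt (α * β) * (Fintype.card G : ℝ) ^ 2 := by
          rw [← hsq, Real.sqrt_sq (by positivity)]
  -- assemble
  rw [hdiff]
  calc ‖(1 / (Fintype.card G : ℂ)) * ∑ χ ∈ S, (Fa χ * Fb χ) * (χ x * (χ b - 1))‖
      = (1 / (Fintype.card G : ℝ)) *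
        ‖∑ χ ∈ S, (Fa χ * Fb χ) * (χ x * (χ b - 1))‖ := by
        rw [norm_mul]
        congr 1
        rw [norm_div, norm_one]
        norm_num
    _ ≤ (1 / (Fintype.card G : ℝ)) *
        ∑ χ ∈ S, ‖Fa χ‖ * ‖Fb χ‖ * ζ := by
        refine mul_le_mul_of_nonneg_left ?_ (by positivity)
        refine (norm_sum_le _ _).trans (Finset.sum_le_sum fun χ hχ => ?_)
        have hx1 : ‖χ x‖ = 1 := by
          exact AddChar.norm_apply _ _
        rw [norm_mul, norm_mul, norm_mul, hx1, one_mul]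
        exact mul_le_mul_of_nonneg_left (hchib χ hχ)
          (mul_nonneg (norm_nonneg _) (norm_nonneg _))
    _ ≤ (1 / (Fintype.card G : ℝ)) *
        ((∑ χ : AddChar G ℂ, ‖Fa χ‖ * ‖Fb χ‖) * ζ) := by
        refine mul_le_mul_of_nonneg_left ?_ (by positivity)
        rw [← Finset.sum_mul]
        refine mul_le_mul_of_nonneg_right ?_ hζ.le
        exact Finset.sum_le_sum_of_subset_of_nonneg (Finset.subset_univ S)
          (fun χ _ _ => mul_nonneg (norm_nonneg _) (norm_nonneg _))
    _ ≤ (1 / (Fintype.card G : ℝ)) * ((Real.sqrt (α * β) * (Fintype.card G : ℝ) ^ 2) * ζ) := by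
        refine mul_le_mul_of_nonneg_left (mul_le_mul_of_nonneg_right hCS hζ.le) (by positivity)
    _ = Real.sqrt (α * β) * ζ * Fintype.card G := by field_simp
end

section
/- For all sufficiently large primes p and any M ≤ p/16, the sum Σ_{a=1}^{M} C(p, a) Σ_{b=1}^{p} C(p, b) Σ_{c=1}^{p−a−b+1} C(p−a−b+1, c) is at most 4·3^p·C(p, M)·2^{−M}, and hence is less than 4·(3.75)^p. -/
open Finset

private lemma sum_choose_Icc_le (n : ℕ) : ∑ c ∈ Icc 1 n, ((n.choose c : ℝ)) ≤ 2 ^ n := by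
  have h1 : ∑ c ∈ Icc 1 n, ((n.choose c : ℝ)) ≤ ∑ c ∈ range (n+1), ((n.choose c : ℝ)) := by
    apply sum_le_sum_of_subset_of_nonneg
    · intro x hx; simp only [mem_Icc, mem_range] at *; omega
    · intros; positivity
  calc ∑ c ∈ Icc 1 n, ((n.choose c : ℝ)) ≤ _ := h1
    _ = ((∑ c ∈ range (n+1), n.choose c : ℕ) : ℝ) := by push_cast; ring
    _ = 2^n := by rw [Nat.sum_range_choose]; push_cast; ring

private lemma sum_choose_two_pow (p : ℕ) :
    ∑ b ∈ range (p+1), (p.choose b : ℝ) * 2^(p-b) = 3^p := by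
  have h := add_pow (1:ℝ) 2 p
  norm_num at h
  rw [h]
  apply sum_congr rfl
  intro k _; ring

private lemma choose_le_two_pow (p b : ℕ) : (p.choose b : ℝ) ≤ 2 ^ p := by
  rcases le_or_gt b p with h | h
  · have : p.choose b ≤ 2^p := by
      rw [← Nat.sum_range_choose p]
      exact single_le_sum (f := fun i => p.choose i) (fun i _ => Nat.zero_le _)
        (mem_range.2 (by omega))
    calc (p.choose b : ℝ) ≤ ((2^p : ℕ) : ℝ) := by exact_mod_cast this
      _ = 2^p := by push_cast; ring
  · rw [Nat.choose_eq_zero_of_lt h]; simp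

private lemma geom_sum_le (t : ℕ → ℝ) (M : ℕ) (hM : 1 ≤ M) (h0 : ∀ a, 0 ≤ t a)
    (hr : ∀ a, 1 ≤ a → a + 1 ≤ M → 3 * t a ≤ t (a+1)) :
    ∑ a ∈ Icc 1 M, t a ≤ 3/2 * t M := by
  induction M, hM using Nat.le_induction with
  | base => simp; linarith [h0 1]
  | succ n hn ih =>
    rw [Finset.sum_Icc_succ_top (by omega)]
    have h1 : ∑ a ∈ Icc 1 n, t a ≤ 3/2 * t n :=
      ih (fun a ha hb => hr a ha (by omega))
    have h2 : 3 * t n ≤ t (n+1) := hr n hn (le_refl _)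
    linarith

private lemma key3 (a p : ℕ) (ha : 1 ≤ a) (hap : 16 * a ≤ p) :
    (3:ℝ) * a * 2^a * 2^p ≤ 3^p := by
  have h1 : (3:ℝ)^p = (3/2)^p * 2^p := by
    rw [← mul_pow]; norm_num
  rw [h1]
  have h2pos : (0:ℝ) < 2^p := by positivity
  apply mul_le_mul_of_nonneg_right _ (le_of_lt h2pos)
  have hA : ((3:ℝ)/2)^(16*a) ≤ (3/2)^p := by
    apply pow_le_pow_right₀ (by norm_num) hap
  have hB : ((656:ℝ))^a ≤ ((3:ℝ)/2)^(16*a) := by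
    rw [pow_mul]
    apply pow_le_pow_left₀ (by norm_num) (by norm_num)
  have hC : (3:ℝ) * a * 2^a ≤ 656^a := by
    have h656 : (656:ℝ)^a = 328^a * 2^a := by rw [← mul_pow]; norm_num
    rw [h656]
    apply mul_le_mul_of_nonneg_right _ (by positivity)
    have ha2 : (a:ℝ) < 2^a := by exact_mod_cast (Nat.lt_two_pow_self (n := a))
    have h328 : (328:ℝ)^a = 164^a * 2^a := by rw [← mul_pow]; norm_num
    have h164 : (164:ℝ) ≤ 164^a := le_self_pow₀ (by norm_num) (by omega)
    have h2a : (2:ℝ)^a ≤ 164^a := pow_le_pow_left₀ (by norm_num) (by norm_num) a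
    nlinarith [pow_pos (show (0:ℝ) < 2 by norm_num) a]
  calc (3:ℝ) * a * 2^a ≤ 656^a := hC
    _ ≤ (3/2)^(16*a) := hB
    _ ≤ (3/2)^p := hA

private lemma bsum_le (p a : ℕ) (ha : 1 ≤ a) (hap : 16 * a ≤ p) :
    ∑ b ∈ Icc 1 p, (p.choose b : ℝ) *
        ∑ c ∈ Icc 1 (p - a - b + 1), ((p - a - b + 1).choose c : ℝ)
      ≤ (8/3) * 3^p / 2^a := by
  have hq : a ≤ p := by omega
  have step1 : ∑ b ∈ Icc 1 p, (p.choose b : ℝ) * ∑ c ∈ Icc 1 (p-a-b+1), ((p-a-b+1).choose c : ℝ)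
      ≤ ∑ b ∈ Icc 1 p, (p.choose b : ℝ) * 2^(p-a-b+1) := by
    apply sum_le_sum; intro b _
    exact mul_le_mul_of_nonneg_left (sum_choose_Icc_le _) (by positivity)
  have hsplit : ∑ b ∈ Icc 1 p, (p.choose b : ℝ) * 2^(p-a-b+1)
      = (∑ b ∈ Ioc 0 (p-a), (p.choose b : ℝ) * 2^(p-a-b+1))
        + ∑ b ∈ Ioc (p-a) p, (p.choose b : ℝ) * 2^(p-a-b+1) := by
    rw [show Icc 1 p = Ioc 0 p from Finset.Icc_add_one_left_eq_Ioc 0 p]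
    exact (sum_Ioc_consecutive _ (Nat.zero_le _) (Nat.sub_le _ _)).symm
  have part1 : ∑ b ∈ Ioc 0 (p-a), (p.choose b : ℝ) * 2^(p-a-b+1) ≤ 2 * 3^p / 2^a := by
    have heq : ∀ b ∈ Ioc 0 (p-a), (p.choose b : ℝ) * 2^(p-a-b+1)
        = 2 / 2^a * ((p.choose b : ℝ) * 2^(p-b)) := by
      intro b hb
      rw [mem_Ioc] at hb
      have h2 : (2:ℝ)^(p-a-b+1) = 2 * 2^(p-b) / 2^a := by
        rw [eq_div_iff (by positivity), ← pow_add]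
        have hee : p-a-b+1+a = (p-b)+1 := by omega
        rw [hee, pow_succ]; ring
      rw [h2]; ring
    rw [sum_congr rfl heq, ← mul_sum]
    have hsub : ∑ b ∈ Ioc 0 (p-a), (p.choose b : ℝ) * 2^(p-b) ≤ 3^p := by
      rw [← sum_choose_two_pow p]
      apply sum_le_sum_of_subset_of_nonneg
      · intro x hx; rw [mem_Ioc] at hx; rw [mem_range]; omega
      · intros; positivity
    calc 2 / 2^a * ∑ b ∈ Ioc 0 (p-a), (p.choose b : ℝ) * 2^(p-b)
        ≤ 2 / 2^a * 3^p := by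
          apply mul_le_mul_of_nonneg_left hsub (by positivity)
      _ = 2 * 3^p / 2^a := by ring
  have part2 : ∑ b ∈ Ioc (p-a) p, (p.choose b : ℝ) * 2^(p-a-b+1) ≤ (2/3) * 3^p / 2^a := by
    have hbd : ∀ b ∈ Ioc (p-a) p, (p.choose b : ℝ) * 2^(p-a-b+1) ≤ 2^p * 2 := by
      intro b hb; rw [mem_Ioc] at hb
      have hz : p - a - b = 0 := by omega
      rw [hz, pow_one]
      exact mul_le_mul_of_nonneg_right (choose_le_two_pow p b) (by norm_num)
    have hcard : (#(Ioc (p-a) p) : ℝ) = a := by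
      rw [Nat.card_Ioc]; congr 1; omega
    have hsum : ∑ b ∈ Ioc (p-a) p, (p.choose b : ℝ) * 2^(p-a-b+1) ≤ (a:ℝ) * (2^p * 2) := by
      calc ∑ b ∈ Ioc (p-a) p, (p.choose b : ℝ) * 2^(p-a-b+1)
          ≤ #(Ioc (p-a) p) • (2^p * 2 : ℝ) := sum_le_card_nsmul _ _ _ hbd
        _ = (#(Ioc (p-a) p) : ℝ) * (2^p * 2) := by rw [nsmul_eq_mul]
        _ = (a:ℝ) * (2^p * 2) := by rw [hcard]
    have hk := key3 a p ha hap
    have h2a : (0:ℝ) < 2^a := by positivity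
    calc ∑ b ∈ Ioc (p-a) p, (p.choose b : ℝ) * 2^(p-a-b+1) ≤ (a:ℝ) * (2^p * 2) := hsum
      _ ≤ (2/3) * 3^p / 2^a := by
        rw [le_div_iff₀ h2a]
        nlinarith
  calc ∑ b ∈ Icc 1 p, (p.choose b : ℝ) * ∑ c ∈ Icc 1 (p-a-b+1), ((p-a-b+1).choose c : ℝ)
      ≤ ∑ b ∈ Icc 1 p, (p.choose b : ℝ) * 2^(p-a-b+1) := step1
    _ = _ := hsplit
    _ ≤ 2 * 3^p / 2^a + (2/3) * 3^p / 2^a := add_le_add part1 part2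
    _ = (8/3) * 3^p / 2^a := by ring

theorem stmt14 :
    ∃ p₀ : ℕ, ∀ p : ℕ, p.Prime → p₀ ≤ p → ∀ M : ℕ, M ≤ p / 16 →
      (∑ a ∈ Finset.Icc 1 M, (p.choose a : ℝ) *
          ∑ b ∈ Finset.Icc 1 p, (p.choose b : ℝ) *
            ∑ c ∈ Finset.Icc 1 (p - a - b + 1), ((p - a - b + 1).choose c : ℝ))
        ≤ 4 * 3 ^ p * (p.choose M : ℝ) / 2 ^ M ∧
      (∑ a ∈ Finset.Icc 1 M, (p.choose a : ℝ) *
          ∑ b ∈ Finset.Icc 1 p, (p.choose b : ℝ) *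
            ∑ c ∈ Finset.Icc 1 (p - a - b + 1), ((p - a - b + 1).choose c : ℝ))
        < 4 * (3.75 : ℝ) ^ p := by
  use 2
  intro p hp hp2 M hM
  rcases Nat.eq_zero_or_pos M with hM0 | hM1
  · subst hM0
    constructor
    · simp
    · simp
      positivity
  · have h16M : 16 * M ≤ p := by
      have := (Nat.le_div_iff_mul_le (show 0 < 16 by norm_num)).1 hM; omega
    have key1 : (∑ a ∈ Finset.Icc 1 M, (p.choose a : ℝ) *
          ∑ b ∈ Finset.Icc 1 p, (p.choose b : ℝ) *
            ∑ c ∈ Finset.Icc 1 (p - a - b + 1), ((p - a - b + 1).choose c : ℝ))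
        ≤ 4 * 3 ^ p * (p.choose M : ℝ) / 2 ^ M := by
      calc (∑ a ∈ Finset.Icc 1 M, (p.choose a : ℝ) *
          ∑ b ∈ Finset.Icc 1 p, (p.choose b : ℝ) *
            ∑ c ∈ Finset.Icc 1 (p - a - b + 1), ((p - a - b + 1).choose c : ℝ))
          ≤ ∑ a ∈ Icc 1 M, (p.choose a : ℝ) * ((8/3) * 3^p / 2^a) := by
            apply sum_le_sum; intro a haa; rw [mem_Icc] at haa
            exact mul_le_mul_of_nonneg_left (bsum_le p a haa.1 (by omega)) (by positivity)
        _ = (8/3) * 3^p * ∑ a ∈ Icc 1 M, (p.choose a : ℝ) / 2^a := by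
            rw [mul_sum]; apply sum_congr rfl; intro a _; ring
        _ ≤ (8/3) * 3^p * (3/2 * ((p.choose M : ℝ) / 2^M)) := by
            apply mul_le_mul_of_nonneg_left _ (by positivity)
            apply geom_sum_le _ M hM1 (fun a => by positivity)
            intro a ha1 haM
            have h6 : 6 * p.choose a ≤ p.choose (a+1) := by
              have hc := Nat.choose_succ_right_eq p a
              have hmul : 6 * p.choose a * (a+1) ≤ p.choose (a+1) * (a+1) := by
                rw [hc]
                have hpa : 6*(a+1) ≤ p - a := by omega
                calc 6 * p.choose a * (a+1) = p.choose a * (6*(a+1)) := by ring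
                  _ ≤ p.choose a * (p - a) := Nat.mul_le_mul_left _ hpa
              exact Nat.le_of_mul_le_mul_right hmul (by omega)
            have h6r : (6:ℝ) * (p.choose a : ℝ) ≤ (p.choose (a+1) : ℝ) := by
              exact_mod_cast h6
            have h2s : (0:ℝ) < 2^(a+1) := by positivity
            have heq : (3:ℝ) * ((p.choose a : ℝ) / 2^a) = (6 * (p.choose a : ℝ)) / 2^(a+1) := by
              rw [pow_succ]; field_simp; ring
            rw [heq, div_le_div_iff₀ h2s h2s]
            nlinarith
        _ = 4 * 3^p * (p.choose M : ℝ) / 2^M := by ring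
    refine ⟨key1, lt_of_le_of_lt key1 ?_⟩
    have hp0 : p ≠ 0 := hp.ne_zero
    have hx0 : (0:ℝ) ≤ (p.choose M : ℝ) / 2^M := by positivity
    have hCb : (p.choose M : ℝ) ≤ (9/8)^p * 8^M := by
      have h := add_pow (1/8 : ℝ) 1 p
      have hterm : ((1/8:ℝ))^M * 1^(p-M) * (p.choose M : ℝ) ≤ (9/8)^p := by
        rw [show (9/8:ℝ) = 1/8+1 by norm_num, h]
        exact single_le_sum (f := fun k => (1/8:ℝ)^k * 1^(p-k) * (p.choose k : ℝ))
          (fun i _ => by positivity) (mem_range.2 (by omega))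
      have h8 : (0:ℝ) < 8^M := by positivity
      calc (p.choose M : ℝ) = ((1/8:ℝ)^M * 1^(p-M) * (p.choose M : ℝ)) * 8^M := by
            rw [one_pow]; field_simp
            rw [mul_assoc, ← mul_pow]; norm_num
        _ ≤ (9/8)^p * 8^M := mul_le_mul_of_nonneg_right hterm (le_of_lt h8)
    have hxle : (p.choose M : ℝ) / 2^M ≤ (9/8)^p * 2^(2*M) := by
      rw [div_le_iff₀ (by positivity)]
      calc (p.choose M : ℝ) ≤ (9/8)^p * 8^M := hCb
        _ = (9/8)^p * 2^(2*M) * 2^M := by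
            rw [mul_assoc, ← pow_add, show (8:ℝ) = 2^3 by norm_num, ← pow_mul]
            congr 2; ring
    have hxlt : (p.choose M : ℝ) / 2^M < (1.25:ℝ)^p := by
      apply lt_of_pow_lt_pow_left₀ 16 (by positivity)
      have e1 : (((9:ℝ)/8)^p * 2^(2*M))^16 = (9/8)^(p*16) * 2^(2*M*16) := by
        rw [mul_pow, ← pow_mul, ← pow_mul]
      have e2 : (2:ℝ)^(2*M*16) ≤ 2^(p*2) := by
        apply pow_le_pow_right₀ (by norm_num); omega
      have e3 : ((9:ℝ)/8)^(p*16) * 2^(p*2) = ((9/8)^16 * 2^2)^p := by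
        rw [mul_comm p 16, mul_comm p 2, pow_mul, pow_mul, ← mul_pow]
      have e4 : (((9:ℝ)/8)^16 * 2^2)^p < (((1.25:ℝ))^16)^p := by
        apply pow_lt_pow_left₀ (by norm_num) (by positivity) hp0
      calc ((p.choose M : ℝ) / 2^M)^16 ≤ (((9:ℝ)/8)^p * 2^(2*M))^16 :=
            pow_le_pow_left₀ hx0 hxle 16
        _ = (9/8)^(p*16) * 2^(2*M*16) := e1
        _ ≤ (9/8)^(p*16) * 2^(p*2) := by
            apply mul_le_mul_of_nonneg_left e2 (by positivity)
        _ = ((9/8)^16 * 2^2)^p := e3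
        _ < ((1.25:ℝ)^16)^p := e4
        _ = ((1.25:ℝ)^p)^16 := by rw [← pow_mul, ← pow_mul, Nat.mul_comm 16 p]
    have h375 : (3.75:ℝ)^p = 3^p * (1.25:ℝ)^p := by
      rw [← mul_pow]; norm_num
    rw [h375, mul_div_assoc]
    have h3p : (0:ℝ) < 4 * 3^p := by positivity
    calc 4 * 3^p * ((p.choose M : ℝ) / 2^M) < 4 * 3^p * (1.25:ℝ)^p :=
          (mul_lt_mul_iff_right₀ h3p).2 hxlt
      _ = 4 * (3^p * (1.25:ℝ)^p) := by ring
end
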